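/- Let n ≥ 1 and let A_n denote the alternating group of even permutations of Fin n, acting on vectors in Fin n → ℝ by (σ·v) i = v (σ⁻¹ i). For all integer vectors λ, μ : Fin n → ℤ, ∫_{[0,1]^n} Ê_λ(x) · conj(Ê_μ(x)) dx = card {(σ, τ) ∈ A_n × A_n : σ·λ = τ·μ}, where the integral is with respect to Lebesgue measure on the unit cube {x : Fin n → ℝ, 0 ≤ x i ≤ 1 for all i} and λ, μ are regarded as real vectors. -/

import Mathlib

open MeasureTheory Complex

private lemma cube_single (k : ℤ) :
    ∫ x in Set.Icc (0:ℝ) 1,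
        Complex.exp (2 * (Real.pi:ℂ) * Complex.I * ((k : ℂ) * (x : ℂ))) =
      if k = 0 then 1 else 0 := by
  by_cases hk : k = 0
  · simp [hk, Real.volume_Icc]
  · rw [MeasureTheory.integral_Icc_eq_integral_Ioc,
        ← intervalIntegral.integral_of_le zero_le_one]
    have hc : (2 * (Real.pi:ℂ) * Complex.I * (k:ℂ)) ≠ 0 :=
      mul_ne_zero (mul_ne_zero (mul_ne_zero two_ne_zero
        (Complex.ofReal_ne_zero.2 Real.pi_ne_zero)) Complex.I_ne_zero)
        (Int.cast_ne_zero.2 hk)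
    have e : ∀ x : ℝ, 2 * (Real.pi:ℂ) * Complex.I * ((k:ℂ) * (x:ℂ))
        = (2 * (Real.pi:ℂ) * Complex.I * (k:ℂ)) * (x:ℂ) := fun x => by ring
    simp_rw [e]
    rw [integral_exp_mul_complex hc]
    have h1 : (2 * (Real.pi:ℂ) * Complex.I * (k:ℂ)) * ((1:ℝ):ℂ)
        = (k:ℂ) * (2 * (Real.pi:ℂ) * Complex.I) := by push_cast; ring
    have h0 : (2 * (Real.pi:ℂ) * Complex.I * (k:ℂ)) * ((0:ℝ):ℂ) = 0 := by
      push_cast; ring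
    rw [h1, h0, Complex.exp_int_mul_two_pi_mul_I, Complex.exp_zero]
    simp [hk]

private lemma term_integral (n : ℕ) (k : Fin n → ℤ) :
    ∫ x in Set.univ.pi (fun _ : Fin n => Set.Icc (0:ℝ) 1),
        ∏ i, Complex.exp (2 * (Real.pi:ℂ) * Complex.I * ((k i : ℂ) * (x i : ℂ))) =
      if k = 0 then 1 else 0 := by
  have hmeas : MeasurableSet (Set.univ.pi fun _ : Fin n => Set.Icc (0:ℝ) 1) :=
    MeasurableSet.univ_pi fun _ => measurableSet_Icc
  rw [← MeasureTheory.integral_indicator hmeas]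
  have hind : (Set.univ.pi fun _ : Fin n => Set.Icc (0:ℝ) 1).indicator
      (fun x => ∏ i, Complex.exp (2 * (Real.pi:ℂ) * Complex.I * ((k i : ℂ) * (x i : ℂ))))
      = fun x => ∏ i, (Set.Icc (0:ℝ) 1).indicator
          (fun t : ℝ => Complex.exp (2 * (Real.pi:ℂ) * Complex.I * ((k i : ℂ) * (t : ℂ)))) (x i) := by
    funext x
    by_cases hx : x ∈ Set.univ.pi fun _ : Fin n => Set.Icc (0:ℝ) 1
    · rw [Set.indicator_of_mem hx]
      exact Finset.prod_congr rfl fun i _ =>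
        (Set.indicator_of_mem (hx i trivial)
          (fun t : ℝ => Complex.exp (2 * (Real.pi:ℂ) * Complex.I * ((k i : ℂ) * (t : ℂ))))).symm
    · rw [Set.indicator_of_notMem hx]
      have : ∃ i, x i ∉ Set.Icc (0:ℝ) 1 := by
        by_contra h
        push_neg at h
        exact hx fun i _ => h i
      obtain ⟨i, hi⟩ := this
      exact (Finset.prod_eq_zero (Finset.mem_univ i)
        (Set.indicator_of_notMem hi _)).symm
  rw [hind, MeasureTheory.integral_fintype_prod_volume_eq_prod (ι := Fin n)
    (f := fun i => (Set.Icc (0:ℝ) 1).indicator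
      (fun t : ℝ => Complex.exp (2 * (Real.pi:ℂ) * Complex.I * ((k i : ℂ) * (t : ℂ)))))]
  simp_rw [MeasureTheory.integral_indicator measurableSet_Icc, cube_single]
  rw [Finset.prod_boole]
  congr 1
  simp [funext_iff]

/-- The normalized `E`-orbit function
`Ê_λ(x) = ∑_{σ ∈ Aₙ} exp(2πi ∑ᵢ λ(σ⁻¹ i) · x i)`. -/
noncomputable def Ehat (n : ℕ) (lam x : Fin n → ℝ) : ℂ :=
  ∑ σ : alternatingGroup (Fin n),
    Complex.exp (2 * (Real.pi : ℂ) * Complex.I *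
      ((∑ i, lam ((σ : Equiv.Perm (Fin n))⁻¹ i) * x i : ℝ) : ℂ))

/-- Orthogonality of normalized `E`-orbit functions with integral weights over the
unit cube (the torus `ℝⁿ/ℤⁿ`): the scalar product counts the pairs of group elements
matching the two weights. -/
theorem Ehat_orthogonality_count (n : ℕ) (hn : 1 ≤ n) (lam mu : Fin n → ℤ) :
    ∫ x in Set.univ.pi (fun _ : Fin n => Set.Icc (0 : ℝ) 1),
        Ehat n (fun i => (lam i : ℝ)) x *
          (starRingEnd ℂ) (Ehat n (fun i => (mu i : ℝ)) x) =
      (({p : alternatingGroup (Fin n) × alternatingGroup (Fin n) |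
          (fun i => lam ((p.1 : Equiv.Perm (Fin n))⁻¹ i)) =
            fun i => mu ((p.2 : Equiv.Perm (Fin n))⁻¹ i)}.ncard : ℕ) : ℂ) := by
  classical
  set S := Set.univ.pi (fun _ : Fin n => Set.Icc (0 : ℝ) 1) with hS
  -- pointwise rewriting of the integrand
  have hint : ∀ x : Fin n → ℝ,
      Ehat n (fun i => (lam i : ℝ)) x * (starRingEnd ℂ) (Ehat n (fun i => (mu i : ℝ)) x)
        = ∑ σ : alternatingGroup (Fin n), ∑ τ : alternatingGroup (Fin n),
            ∏ i, Complex.exp (2 * (Real.pi:ℂ) * Complex.I *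
              (((lam ((σ : Equiv.Perm (Fin n))⁻¹ i) - mu ((τ : Equiv.Perm (Fin n))⁻¹ i) : ℤ) : ℂ)
                * ((x i : ℝ) : ℂ))) := by
    intro x
    unfold Ehat
    rw [map_sum, Finset.sum_mul_sum]
    refine Finset.sum_congr rfl fun σ _ => Finset.sum_congr rfl fun τ _ => ?_
    rw [← Complex.exp_conj, ← Complex.exp_add, ← Complex.exp_sum]
    congr 1
    rw [map_mul, Complex.conj_ofReal]
    simp only [map_mul, Complex.conj_I, map_ofNat, Complex.conj_ofReal]
    push_cast
    rw [Finset.mul_sum, Finset.mul_sum, ← Finset.sum_add_distrib]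
    exact Finset.sum_congr rfl fun i _ => by ring
  simp_rw [hint]
  have hInt : ∀ (k : Fin n → ℤ), MeasureTheory.IntegrableOn
      (fun x : Fin n → ℝ => ∏ i, Complex.exp (2 * (Real.pi:ℂ) * Complex.I *
        ((k i : ℂ) * ((x i : ℝ) : ℂ)))) S := by
    intro k
    refine ContinuousOn.integrableOn_compact (isCompact_univ_pi fun _ => isCompact_Icc) ?_
    refine Continuous.continuousOn ?_
    exact continuous_finset_prod _ fun i _ =>
      Complex.continuous_exp.comp (continuous_const.mul
        (continuous_const.mul (Complex.continuous_ofReal.comp (continuous_apply i))))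
  have step : (∫ x in S, ∑ σ : alternatingGroup (Fin n), ∑ τ : alternatingGroup (Fin n),
        ∏ i, Complex.exp (2 * (Real.pi:ℂ) * Complex.I *
          (((lam ((σ : Equiv.Perm (Fin n))⁻¹ i) - mu ((τ : Equiv.Perm (Fin n))⁻¹ i) : ℤ) : ℂ)
            * ((x i : ℝ) : ℂ))))
      = ∑ σ : alternatingGroup (Fin n), ∑ τ : alternatingGroup (Fin n),
          if (fun i => lam ((σ : Equiv.Perm (Fin n))⁻¹ i)) =
              (fun i => mu ((τ : Equiv.Perm (Fin n))⁻¹ i)) then (1:ℂ) else 0 := by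
    rw [MeasureTheory.integral_finset_sum _ (fun σ _ =>
      MeasureTheory.integrable_finset_sum _ (fun τ _ => hInt _))]
    refine Finset.sum_congr rfl fun σ _ => ?_
    rw [MeasureTheory.integral_finset_sum _ (fun τ _ => hInt _)]
    refine Finset.sum_congr rfl fun τ _ => ?_
    rw [term_integral n (fun i => lam ((σ : Equiv.Perm (Fin n))⁻¹ i)
      - mu ((τ : Equiv.Perm (Fin n))⁻¹ i))]
    exact if_congr (by simp [funext_iff, sub_eq_zero]) rfl rfl
  rw [step]
  rw [Set.ncard_eq_toFinset_card', Set.toFinset_setOf]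
  rw [← Finset.sum_boole (p := fun p : alternatingGroup (Fin n) × alternatingGroup (Fin n) =>
    (fun i => lam ((p.1 : Equiv.Perm (Fin n))⁻¹ i)) = fun i => mu ((p.2 : Equiv.Perm (Fin n))⁻¹ i))]
  rw [← Finset.univ_product_univ, Finset.sum_product]
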